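/- Exponential-times-stretched-exponential sum bound (expander case): Let Δ > 1, a > 0, and 0 < β < 1. Then there exist constants C₁, C₂ > 0 depending only on Δ, a, β such that for every δ > 0: the series Σ_{r=0}^{∞} Δ^r·exp(−a·δ·r^{1/(1−β)}) converges and is at most C₂·exp(C₁·δ^{−(1−β)/β}). -/

import Mathlib

/-- Exponential-times-stretched-exponential sum bound (expander case).
For `Δ > 1`, `a > 0`, `0 < β < 1`, there are constants `C₁ C₂ > 0` (depending only on
`Δ, a, β`) such that for every `δ > 0` the series
`Σ_{r=0}^∞ Δ^r · exp(−a·δ·r^{1/(1−β)})` converges and is at most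
`C₂ · exp(C₁ · δ^{−(1−β)/β})`. -/
theorem stretched_exponential_sum_bound_expander
    (Δ a β : ℝ) (hΔ : 1 < Δ) (ha : 0 < a) (hβ0 : 0 < β) (hβ1 : β < 1) :
    ∃ C₁ C₂ : ℝ, 0 < C₁ ∧ 0 < C₂ ∧ ∀ δ : ℝ, 0 < δ →
      Summable (fun r : ℕ => Δ ^ r * Real.exp (-(a * δ * (r : ℝ) ^ (1 / (1 - β))))) ∧
      (∑' r : ℕ, Δ ^ r * Real.exp (-(a * δ * (r : ℝ) ^ (1 / (1 - β)))))
        ≤ C₂ * Real.exp (C₁ * δ ^ (-((1 - β) / β))) := by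
  have h1β : (0:ℝ) < 1 - β := by linarith
  set p : ℝ := 1 / (1 - β) with hp
  set q : ℝ := 1 / β with hq
  have hp1 : 1 < p := by
    rw [hp, lt_div_iff₀ h1β]; linarith
  have hpq : p.HolderConjugate q := by
    rw [Real.holderConjugate_iff]
    constructor
    · exact hp1
    · rw [hp, hq]; field_simp; ring
  have hppos : 0 < p := lt_trans one_pos hp1
  have hqpos : 0 < q := by rw [hq]; positivity
  set L : ℝ := Real.log Δ + 1 with hLdef
  have hL : 0 < L := by
    have := Real.log_pos hΔ; linarith
  have hΔ0 : (0:ℝ) < Δ := lt_trans one_pos hΔ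
  set C₁ : ℝ := (L ^ q / q) * (a * p) ^ (-(q / p)) with hC1
  have hC1pos : 0 < C₁ := by
    apply mul_pos (div_pos (Real.rpow_pos_of_pos hL q) hqpos)
    exact Real.rpow_pos_of_pos (by positivity) _
  set C₂ : ℝ := (1 - Real.exp (-1))⁻¹ with hC2
  have hexp1 : Real.exp (-1) < 1 := by
    rw [Real.exp_lt_one_iff]; norm_num
  have hexp0 : (0:ℝ) ≤ Real.exp (-1) := (Real.exp_pos _).le
  have hC2pos : 0 < C₂ := by
    rw [hC2]; exact inv_pos.2 (by linarith)
  refine ⟨C₁, C₂, hC1pos, hC2pos, fun δ hδ => ?_⟩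
  have hqp : q / p = (1 - β) / β := by
    rw [hp, hq]; field_simp
  -- key per-term bound
  have key : ∀ r : ℕ, Δ ^ r * Real.exp (-(a * δ * (r : ℝ) ^ p))
      ≤ Real.exp (C₁ * δ ^ (-((1 - β) / β))) * Real.exp (-1) ^ r := by
    intro r
    have hr0 : (0:ℝ) ≤ (r:ℝ) := Nat.cast_nonneg r
    have hadp : (0:ℝ) < a * δ * p := by positivity
    have hx : (0:ℝ) ≤ (a * δ * p) ^ (1/p) * (r:ℝ) := by positivity
    have hy : (0:ℝ) ≤ L * (a * δ * p) ^ (-(1/p)) := by positivity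
    have young := Real.young_inequality_of_nonneg hx hy hpq
    have hone : (a * δ * p) ^ (1/p) * (a * δ * p) ^ (-(1/p)) = 1 := by
      rw [← Real.rpow_add hadp]; simp
    have hxy : (a * δ * p) ^ (1/p) * (r:ℝ) * (L * (a * δ * p) ^ (-(1/p))) = L * r := by
      linear_combination (L * (r:ℝ)) * hone
    have hxp : ((a * δ * p) ^ (1/p) * (r:ℝ)) ^ p = (a * δ * p) * (r:ℝ) ^ p := by
      rw [Real.mul_rpow (by positivity) hr0, ← Real.rpow_mul hadp.le,
        one_div_mul_cancel hppos.ne', Real.rpow_one]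
    have hyq : (L * (a * δ * p) ^ (-(1/p))) ^ q = L ^ q * (a * δ * p) ^ (-(q/p)) := by
      rw [Real.mul_rpow hL.le (by positivity), ← Real.rpow_mul hadp.le]
      ring_nf
    rw [hxy, hxp, hyq] at young
    have hsplit : (a * δ * p) ^ (-(q/p)) = (a * p) ^ (-(q/p)) * δ ^ (-(q/p)) := by
      rw [show a * δ * p = (a * p) * δ by ring, Real.mul_rpow (by positivity) hδ.le]
    have hyoung : L * (r:ℝ) ≤ a * δ * (r:ℝ) ^ p + C₁ * δ ^ (-((1 - β)/β)) := by
      calc L * (r:ℝ) ≤ (a * δ * p) * (r:ℝ) ^ p / p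
            + L ^ q * (a * δ * p) ^ (-(q/p)) / q := young
        _ = a * δ * (r:ℝ) ^ p + C₁ * δ ^ (-(q/p)) := by
            rw [hsplit, hC1]; field_simp
        _ = a * δ * (r:ℝ) ^ p + C₁ * δ ^ (-((1 - β)/β)) := by rw [hqp]
    -- convert both sides to exponentials
    have hΔr : Δ ^ r = Real.exp ((r:ℝ) * Real.log Δ) := by
      rw [← Real.exp_log hΔ0, ← Real.exp_nat_mul, Real.exp_log hΔ0]
    have hRHS : Real.exp (C₁ * δ ^ (-((1 - β)/β))) * Real.exp (-1) ^ r
        = Real.exp (C₁ * δ ^ (-((1 - β)/β)) + (r:ℝ) * (-1)) := by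
      rw [← Real.exp_nat_mul, ← Real.exp_add]
    rw [hΔr, ← Real.exp_add, hRHS]
    apply Real.exp_le_exp.2
    have : (r:ℝ) * Real.log Δ + (r:ℝ) = L * (r:ℝ) := by rw [hLdef]; ring
    nlinarith [hyoung]
  have hsum2 : Summable (fun r : ℕ =>
      Real.exp (C₁ * δ ^ (-((1 - β)/β))) * Real.exp (-1) ^ r) :=
    (summable_geometric_of_lt_one hexp0 hexp1).mul_left _
  have hnn : ∀ r : ℕ, 0 ≤ Δ ^ r * Real.exp (-(a * δ * (r : ℝ) ^ (1 / (1 - β)))) := by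
    intro r; positivity
  have hsum1 : Summable (fun r : ℕ => Δ ^ r * Real.exp (-(a * δ * (r : ℝ) ^ (1 / (1 - β))))) :=
    Summable.of_nonneg_of_le hnn (fun r => by simpa [← hp] using key r) hsum2
  refine ⟨hsum1, ?_⟩
  calc (∑' r : ℕ, Δ ^ r * Real.exp (-(a * δ * (r : ℝ) ^ (1 / (1 - β)))))
      ≤ ∑' r : ℕ, Real.exp (C₁ * δ ^ (-((1 - β)/β))) * Real.exp (-1) ^ r :=
        Summable.tsum_le_tsum (fun r => by simpa [← hp] using key r) hsum1 hsum2
    _ = Real.exp (C₁ * δ ^ (-((1 - β)/β))) * (1 - Real.exp (-1))⁻¹ := by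
        rw [tsum_mul_left, tsum_geometric_of_lt_one hexp0 hexp1]
    _ = C₂ * Real.exp (C₁ * δ ^ (-((1 - β)/β))) := by rw [hC2]; ring
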